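/- Let ρ be a subnormalized density matrix and M₁,…,M_m operators with 0 ≤ M_u² ≤ 1. Then Tr[M_m² M_{m−1}⋯M₁ ρ M₁⋯M_{m−1}] ≥ Tr[M_m² ρ] − 2 Σ_{u=1}^{m−1} D(M_u ρ M_u, ρ). -/

import Mathlib

open Matrix ComplexOrder BigOperators Finset

noncomputable def traceNorm {d : Type*} [Fintype d] [DecidableEq d] (A : Matrix d d ℂ) : ℝ :=
  (((Matrix.posSemidef_conjTranspose_mul_self A).1.eigenvectorUnitary : Matrix d d ℂ) *
      diagonal (fun i => ((√((Matrix.posSemidef_conjTranspose_mul_self A).1.eigenvalues i) : ℝ) : ℂ)) *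
      (star (Matrix.posSemidef_conjTranspose_mul_self A).1.eigenvectorUnitary : Matrix d d ℂ)).trace.re

noncomputable def traceDist {d : Type*} [Fintype d] [DecidableEq d] (A B : Matrix d d ℂ) : ℝ :=
  traceNorm (A - B) / 2

namespace BisectionAux

variable {d : Type*} [Fintype d] [DecidableEq d]

lemma ofReal_RC (r : ℝ) : (RCLike.ofReal r : ℂ) = Complex.ofReal r := rfl

lemma traceNorm_eq_of_sq {A S : Matrix d d ℂ} (hS : S.PosSemidef) (h : S ^ 2 = Aᴴ * A) :
    traceNorm A = S.trace.re := by
  open MatrixOrder in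
  have hc : cfc Real.sqrt (Aᴴ * A) = S := by
    rw [← cfcₙ_eq_cfc (hf0 := Real.sqrt_zero), ← CFC.sqrt_eq_real_sqrt _ (Matrix.posSemidef_conjTranspose_mul_self A).nonneg]
    exact CFC.sqrt_unique (by rw [← h, pow_two]) hS.nonneg
  rw [← hc, (Matrix.posSemidef_conjTranspose_mul_self A).1.cfc_eq]
  rfl

lemma traceNorm_zero : traceNorm (0 : Matrix d d ℂ) = 0 := by
  rw [traceNorm_eq_of_sq (Matrix.PosSemidef.zero (n := d) (R := ℂ)) (by simp), trace_zero]
  simp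

lemma trace_conj {V : Matrix d d ℂ} (hV : star V * V = 1) (A : Matrix d d ℂ) :
    (V * A * star V).trace = A.trace := by
  rw [trace_mul_cycle, hV, one_mul]

lemma conj_diag_psd (V : Matrix d d ℂ) {f : d → ℝ} (hf : ∀ i, 0 ≤ f i) :
    (V * diagonal (RCLike.ofReal ∘ f) * star V).PosSemidef := by
  rw [star_eq_conjTranspose]
  refine Matrix.PosSemidef.mul_mul_conjTranspose_same ?_ V
  refine posSemidef_diagonal_iff.mpr fun i => ?_
  simpa using Complex.zero_le_real.mpr (hf i)

lemma conj_mul_conj {V : Matrix d d ℂ} (hV : star V * V = 1) (A B : Matrix d d ℂ) :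
    (V * A * star V) * (V * B * star V) = V * (A * B) * star V := by
  have h : star V * (V * (B * star V)) = B * star V := by
    rw [← mul_assoc, hV, one_mul]
  simp only [mul_assoc, h]

lemma conj_congr (V : Matrix d d ℂ) {f g : d → ℂ} (h : ∀ i, f i = g i) :
    V * diagonal f * star V = V * diagonal g * star V := by
  rw [funext h]

lemma psd_diag_re_nonneg {A : Matrix d d ℂ} (hA : A.PosSemidef) (i : d) : 0 ≤ (A i i).re := by
  exact (Complex.le_def.mp hA.diag_nonneg).1

lemma star_mul_self_mul_eq_diagonal' {X : Matrix d d ℂ} (hX : X.IsHermitian) :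
    star (hX.eigenvectorUnitary : Matrix d d ℂ) * X * (hX.eigenvectorUnitary : Matrix d d ℂ)
      = diagonal (RCLike.ofReal ∘ hX.eigenvalues) := by
  have h := hX.conjStarAlgAut_star_eigenvectorUnitary
  rw [Unitary.conjStarAlgAut_apply, Unitary.coe_star, star_star] at h
  exact h

/-- `Tr(A X).re = ∑ i, Re (V* A V)_{ii} * λ_i` for Hermitian `X`. -/
lemma trace_mul_herm_re {X : Matrix d d ℂ} (hX : X.IsHermitian) (A : Matrix d d ℂ) :
    ((A * X).trace).re =
      ∑ i, ((star (hX.eigenvectorUnitary : Matrix d d ℂ) * A * hX.eigenvectorUnitary) i i).re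
        * hX.eigenvalues i := by
  set V := (hX.eigenvectorUnitary : Matrix d d ℂ) with hVdef
  have h1 : (A * X).trace =
      ((star V * A * V) * diagonal (RCLike.ofReal ∘ hX.eigenvalues)).trace := by
    conv_lhs => rw [hX.spectral_theorem, Unitary.conjStarAlgAut_apply]
    rw [show A * (V * diagonal (RCLike.ofReal ∘ hX.eigenvalues) * star V)
        = (A * V) * diagonal (RCLike.ofReal ∘ hX.eigenvalues) * star V by
      simp only [mul_assoc]]
    rw [trace_mul_cycle, ← mul_assoc]
  rw [h1, Matrix.trace, Complex.re_sum]
  refine Finset.sum_congr rfl fun i _ => ?_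
  simp [Matrix.diag_apply, Matrix.mul_diagonal, Complex.mul_re]

lemma conj_sub_one_psd {A : Matrix d d ℂ} (hA1 : (1 - A).PosSemidef)
    {V : Matrix d d ℂ} (hV : star V * V = 1) :
    (1 - star V * A * V).PosSemidef := by
  have h := hA1.conjTranspose_mul_mul_same V
  rw [← star_eq_conjTranspose] at h
  have e : star V * (1 - A) * V = 1 - star V * A * V := by
    rw [mul_sub, sub_mul, mul_one, hV]
  rwa [e] at h

lemma diag_re_le_one {B : Matrix d d ℂ} (hB1 : (1 - B).PosSemidef) (i : d) : (B i i).re ≤ 1 := by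
  have h := psd_diag_re_nonneg hB1 i
  have : ((1 - B) i i).re = 1 - (B i i).re := by
    simp [Matrix.sub_apply, Matrix.one_apply_eq]
  rw [this] at h
  linarith

lemma conj_psd {A : Matrix d d ℂ} (hA : A.PosSemidef) {V : Matrix d d ℂ} :
    (star V * A * V).PosSemidef := by
  have h := hA.conjTranspose_mul_mul_same V
  rwa [← star_eq_conjTranspose] at h

/-- traceNorm of a Hermitian matrix is the sum of absolute values of eigenvalues. -/
lemma traceNorm_eq_sum_abs {X : Matrix d d ℂ} (hX : X.IsHermitian) :
    traceNorm X = ∑ i, |hX.eigenvalues i| := by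
  set V := (hX.eigenvectorUnitary : Matrix d d ℂ) with hVdef
  have hV1 : star V * V = 1 := Matrix.mem_unitaryGroup_iff'.mp hX.eigenvectorUnitary.2
  set f : d → ℝ := fun i => |hX.eigenvalues i| with hfdef
  have hfnn : ∀ i, 0 ≤ f i := fun i => abs_nonneg _
  have hSpsd := conj_diag_psd V hfnn
  have hsq : (V * diagonal (RCLike.ofReal ∘ f) * star V) ^ 2 = Xᴴ * X := by
    rw [hX.eq, pow_two, conj_mul_conj hV1, diagonal_mul_diagonal]
    conv_rhs => rw [hX.spectral_theorem, Unitary.conjStarAlgAut_apply, conj_mul_conj hV1, diagonal_mul_diagonal]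
    refine conj_congr V fun i => ?_
    simp only [Function.comp_apply, hfdef, ofReal_RC]
    rw [← Complex.ofReal_mul, ← Complex.ofReal_mul, Complex.ofReal_inj]
    exact abs_mul_abs_self _
  rw [traceNorm_eq_of_sq hSpsd hsq, trace_conj hV1, trace_diagonal, Complex.re_sum]
  simp

/-- Jordan decomposition realizing the trace norm. -/
lemma jordan {X : Matrix d d ℂ} (hX : X.IsHermitian) :
    ∃ P N : Matrix d d ℂ, P.PosSemidef ∧ N.PosSemidef ∧ X = P - N ∧
      traceNorm X = P.trace.re + N.trace.re := by
  set V := (hX.eigenvectorUnitary : Matrix d d ℂ) with hVdef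
  have hV1 : star V * V = 1 := Matrix.mem_unitaryGroup_iff'.mp hX.eigenvectorUnitary.2
  set lam := hX.eigenvalues with hlam
  refine ⟨V * diagonal (RCLike.ofReal ∘ fun i => max (lam i) 0) * star V,
    V * diagonal (RCLike.ofReal ∘ fun i => max (-lam i) 0) * star V,
    conj_diag_psd V (fun i => le_max_right _ _),
    conj_diag_psd V (fun i => le_max_right _ _), ?_, ?_⟩
  · conv_lhs => rw [hX.spectral_theorem]
    rw [← sub_mul, ← mul_sub, diagonal_sub]
    refine conj_congr V fun i => ?_
    simp only [Function.comp_apply, ofReal_RC]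
    rw [← Complex.ofReal_sub, Complex.ofReal_inj]
    rcases le_total 0 (lam i) with h | h
    · rw [max_eq_left h, max_eq_right (by linarith)]; ring
    · rw [max_eq_right h, max_eq_left (by linarith)]; ring
  · rw [traceNorm_eq_sum_abs hX, trace_conj hV1, trace_conj hV1, trace_diagonal,
      trace_diagonal, Complex.re_sum, Complex.re_sum, ← Finset.sum_add_distrib]
    refine Finset.sum_congr rfl fun i _ => ?_
    simp only [Function.comp_apply, ofReal_RC, Complex.ofReal_re]
    rcases le_total 0 (lam i) with h | h
    · rw [abs_of_nonneg h, max_eq_left h, max_eq_right (by linarith)]; ring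
    · rw [abs_of_nonpos h, max_eq_right h, max_eq_left (by linarith)]; ring

/-- Upper bound on trace norm of a difference of PSD matrices. -/
lemma traceNorm_sub_psd_le {Y₁ Y₂ : Matrix d d ℂ} (h₁ : Y₁.PosSemidef) (h₂ : Y₂.PosSemidef) :
    traceNorm (Y₁ - Y₂) ≤ (Y₁.trace).re + (Y₂.trace).re := by
  have hX : (Y₁ - Y₂).IsHermitian := h₁.1.sub h₂.1
  set V := (hX.eigenvectorUnitary : Matrix d d ℂ) with hVdef
  have hV1 : star V * V = 1 := Matrix.mem_unitaryGroup_iff'.mp hX.eigenvectorUnitary.2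
  have hV2 : V * star V = 1 := Matrix.mem_unitaryGroup_iff.mp hX.eigenvectorUnitary.2
  have hdiag := star_mul_self_mul_eq_diagonal' hX
  have hsub : star V * (Y₁ - Y₂) * V = star V * Y₁ * V - star V * Y₂ * V := by
    rw [mul_sub, sub_mul]
  rw [hsub] at hdiag
  have hTr : ∀ Y : Matrix d d ℂ, (star V * Y * V).trace = Y.trace := by
    intro Y
    rw [trace_mul_cycle, hV2, one_mul]
  rw [traceNorm_eq_sum_abs hX]
  have h1 : (Y₁.trace).re = ∑ i, ((star V * Y₁ * V) i i).re := by
    rw [← hTr Y₁, Matrix.trace, Complex.re_sum]; rfl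
  have h2 : (Y₂.trace).re = ∑ i, ((star V * Y₂ * V) i i).re := by
    rw [← hTr Y₂, Matrix.trace, Complex.re_sum]; rfl
  rw [h1, h2, ← Finset.sum_add_distrib]
  refine Finset.sum_le_sum fun i _ => ?_
  have he : (star V * Y₁ * V) i i - (star V * Y₂ * V) i i
      = (RCLike.ofReal (hX.eigenvalues i) : ℂ) := by
    have h4 := congrFun (congrFun hdiag i) i
    simpa [Matrix.sub_apply, Matrix.diagonal_apply_eq] using h4
  have hre : hX.eigenvalues i = ((star V * Y₁ * V) i i).re - ((star V * Y₂ * V) i i).re := by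
    have h5 := congrArg Complex.re he
    simp only [Complex.sub_re, ofReal_RC, Complex.ofReal_re] at h5
    linarith
  have ha := psd_diag_re_nonneg (conj_psd h₁ (V := V)) i
  have hb := psd_diag_re_nonneg (conj_psd h₂ (V := V)) i
  rw [hre]
  rw [abs_sub_le_iff]
  constructor <;> linarith

lemma traceNorm_add_le {X Y : Matrix d d ℂ} (hX : X.IsHermitian) (hY : Y.IsHermitian) :
    traceNorm (X + Y) ≤ traceNorm X + traceNorm Y := by
  obtain ⟨P₁, N₁, hP₁, hN₁, hXe, hXt⟩ := jordan hX
  obtain ⟨P₂, N₂, hP₂, hN₂, hYe, hYt⟩ := jordan hY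
  have he : X + Y = (P₁ + P₂) - (N₁ + N₂) := by rw [hXe, hYe]; abel
  rw [he, hXt, hYt]
  have := traceNorm_sub_psd_le (hP₁.add hP₂) (hN₁.add hN₂)
  simp only [trace_add, Complex.add_re] at this
  linarith

/-- `-‖X‖₁ ≤ Re Tr (A X)` for `0 ≤ A ≤ 1`, `X` Hermitian. -/
lemma neg_traceNorm_le_re_trace {X A : Matrix d d ℂ} (hX : X.IsHermitian)
    (hA : A.PosSemidef) (hA1 : (1 - A).PosSemidef) :
    -(traceNorm X) ≤ ((A * X).trace).re := by
  rw [trace_mul_herm_re hX A, traceNorm_eq_sum_abs hX, ← Finset.sum_neg_distrib]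
  refine Finset.sum_le_sum fun i _ => ?_
  set V := (hX.eigenvectorUnitary : Matrix d d ℂ)
  have hV1 : star V * V = 1 := Matrix.mem_unitaryGroup_iff'.mp hX.eigenvectorUnitary.2
  have h0 : 0 ≤ ((star V * A * V) i i).re := psd_diag_re_nonneg (conj_psd hA) i
  have h1 : ((star V * A * V) i i).re ≤ 1 := diag_re_le_one (conj_sub_one_psd hA1 hV1) i
  set t := ((star V * A * V) i i).re
  have habs : |t * hX.eigenvalues i| ≤ |hX.eigenvalues i| := by
    rw [abs_mul]
    calc |t| * |hX.eigenvalues i| ≤ 1 * |hX.eigenvalues i| := by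
          apply mul_le_mul_of_nonneg_right _ (abs_nonneg _)
          rw [abs_of_nonneg h0]; exact h1
      _ = |hX.eigenvalues i| := one_mul _
  have := neg_abs_le (t * hX.eigenvalues i)
  linarith

/-- `Re Tr(A Y) ≤ Re Tr Y` for `0 ≤ A ≤ 1`, `Y` PSD. -/
lemma re_trace_mul_le_trace {Y A : Matrix d d ℂ} (hY : Y.PosSemidef)
    (hA : A.PosSemidef) (hA1 : (1 - A).PosSemidef) :
    ((A * Y).trace).re ≤ (Y.trace).re := by
  rw [trace_mul_herm_re hY.1 A]
  set V := (hY.1.eigenvectorUnitary : Matrix d d ℂ)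
  have hV1 : star V * V = 1 := Matrix.mem_unitaryGroup_iff'.mp hY.1.eigenvectorUnitary.2
  have htr : (Y.trace).re = ∑ i, hY.1.eigenvalues i := by
    conv_lhs => rw [hY.1.spectral_theorem, Unitary.conjStarAlgAut_apply]
    rw [trace_conj hV1, trace_diagonal, Complex.re_sum]
    simp
  rw [htr]
  refine Finset.sum_le_sum fun i _ => ?_
  have h0 : 0 ≤ ((star V * A * V) i i).re := psd_diag_re_nonneg (conj_psd hA) i
  have h1 : ((star V * A * V) i i).re ≤ 1 := diag_re_le_one (conj_sub_one_psd hA1 hV1) i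
  have hlam : 0 ≤ hY.1.eigenvalues i := hY.eigenvalues_nonneg i
  nlinarith

/-- `0 ≤ A ≤ 1` implies `0 ≤ A² ≤ 1`. -/
lemma sq_psd_and_le_one {A : Matrix d d ℂ} (hA : A.PosSemidef) (hA1 : (1 - A).PosSemidef) :
    (A * A).PosSemidef ∧ (1 - A * A).PosSemidef := by
  set V := (hA.1.eigenvectorUnitary : Matrix d d ℂ) with hVdef
  have hV1 : star V * V = 1 := Matrix.mem_unitaryGroup_iff'.mp hA.1.eigenvectorUnitary.2
  have hV2 : V * star V = 1 := Matrix.mem_unitaryGroup_iff.mp hA.1.eigenvectorUnitary.2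
  set mu := hA.1.eigenvalues with hmu
  have hmu0 : ∀ i, 0 ≤ mu i := hA.eigenvalues_nonneg
  have hmu1 : ∀ i, mu i ≤ 1 := by
    intro i
    have hB := conj_sub_one_psd hA1 hV1
    rw [star_mul_self_mul_eq_diagonal' hA.1] at hB
    have := psd_diag_re_nonneg hB i
    have he : ((1 - diagonal (RCLike.ofReal ∘ mu) : Matrix d d ℂ) i i).re = 1 - mu i := by
      simp [Matrix.sub_apply, Matrix.one_apply_eq, Matrix.diagonal_apply_eq]
    rw [he] at this
    linarith
  have hAA : A * A = V * diagonal (RCLike.ofReal ∘ fun i => mu i * mu i) * star V := by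
    conv_lhs => rw [hA.1.spectral_theorem, Unitary.conjStarAlgAut_apply]
    rw [conj_mul_conj hV1, diagonal_mul_diagonal]
    refine conj_congr V fun i => ?_
    simp [ofReal_RC]
    rfl
  constructor
  · rw [hAA]
    exact conj_diag_psd V fun i => mul_nonneg (hmu0 i) (hmu0 i)
  · have hd1 : diagonal (RCLike.ofReal ∘ fun _ : d => (1:ℝ)) = (1 : Matrix d d ℂ) := by
      rw [← diagonal_one]
      congr 1
    have hone : (1 : Matrix d d ℂ) = V * diagonal (RCLike.ofReal ∘ fun _ : d => (1:ℝ)) * star V := by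
      rw [hd1, mul_one, hV2]
    have h1AA : 1 - A * A = V * diagonal (RCLike.ofReal ∘ fun i => 1 - mu i * mu i) * star V := by
      rw [hAA]
      conv_lhs => rw [hone]
      rw [← sub_mul, ← mul_sub, diagonal_sub]
      refine conj_congr V fun i => ?_
      simp only [Function.comp_apply, ofReal_RC]
      rw [← Complex.ofReal_sub]
    rw [h1AA]
    exact conj_diag_psd V fun i => by nlinarith [hmu0 i, hmu1 i]

/-- trace-norm contraction under conjugation by `0 ≤ M ≤ 1`. -/
lemma traceNorm_conj_le {X M : Matrix d d ℂ} (hX : X.IsHermitian)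
    (hM : M.PosSemidef) (hM1 : (1 - M).PosSemidef) :
    traceNorm (M * X * M) ≤ traceNorm X := by
  obtain ⟨P, N, hP, hN, hXe, hXt⟩ := jordan hX
  obtain ⟨hMM, hMM1⟩ := sq_psd_and_le_one hM hM1
  have hMP : (M * P * M).PosSemidef := by
    have := hP.mul_mul_conjTranspose_same M
    rwa [hM.1.eq] at this
  have hMN : (M * N * M).PosSemidef := by
    have := hN.mul_mul_conjTranspose_same M
    rwa [hM.1.eq] at this
  have hkey : M * X * M = M * P * M - M * N * M := by rw [hXe]; noncomm_ring
  have htr : ∀ {Y : Matrix d d ℂ}, Y.PosSemidef → ((M * Y * M).trace).re ≤ (Y.trace).re := by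
    intro Y hY
    have he : (M * Y * M).trace = ((M * M) * Y).trace := by
      rw [trace_mul_cycle]
    rw [he]
    exact re_trace_mul_le_trace hY hMM hMM1
  calc traceNorm (M * X * M) ≤ ((M * P * M).trace).re + ((M * N * M).trace).re := by
        rw [hkey]; exact traceNorm_sub_psd_le hMP hMN
    _ ≤ (P.trace).re + (N.trace).re := add_le_add (htr hP) (htr hN)
    _ = traceNorm X := hXt.symm

lemma prod_conjTranspose (T : List (Matrix d d ℂ)) (h : ∀ A ∈ T, Aᴴ = A) :
    (T.prod)ᴴ = T.reverse.prod := by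
  rw [conjTranspose_list_prod, List.map_congr_left h]
  simp

lemma conj_list_herm (T : List (Matrix d d ℂ)) (hT : ∀ A ∈ T, Aᴴ = A)
    {X : Matrix d d ℂ} (hX : X.IsHermitian) :
    (T.reverse.prod * X * T.prod).IsHermitian := by
  have h1 : (T.prod)ᴴ = T.reverse.prod := prod_conjTranspose T hT
  have h2 : (T.reverse.prod)ᴴ = T.prod := by
    rw [prod_conjTranspose T.reverse (fun A hA => hT A (List.mem_reverse.mp hA)),
      List.reverse_reverse]
  show (T.reverse.prod * X * T.prod)ᴴ = _
  rw [conjTranspose_mul, conjTranspose_mul, h1, h2, hX.eq, mul_assoc]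

lemma cons_conj_eq (Mh : Matrix d d ℂ) (T : List (Matrix d d ℂ)) (X : Matrix d d ℂ) :
    (Mh :: T).reverse.prod * X * (Mh :: T).prod
      = T.reverse.prod * (Mh * X * Mh) * T.prod := by
  simp only [List.reverse_cons, List.prod_append, List.prod_cons, List.prod_nil,
    List.prod_singleton, mul_one]
  noncomm_ring

lemma traceNorm_conj_list_le (T : List (Matrix d d ℂ))
    (hT : ∀ A ∈ T, A.PosSemidef ∧ (1 - A).PosSemidef)
    {X : Matrix d d ℂ} (hX : X.IsHermitian) :
    traceNorm (T.reverse.prod * X * T.prod) ≤ traceNorm X := by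
  induction T generalizing X with
  | nil => simp
  | cons Mh T ih =>
    have hMh := (hT Mh (List.mem_cons_self)).1
    have hMh1 := (hT Mh (List.mem_cons_self)).2
    have hXM : (Mh * X * Mh).IsHermitian := by
      show _ᴴ = _
      rw [conjTranspose_mul, conjTranspose_mul, hMh.1.eq, hX.eq, mul_assoc]
    rw [cons_conj_eq]
    exact (ih (fun A hA => hT A (List.mem_cons_of_mem _ hA)) hXM).trans
      (traceNorm_conj_le hX hMh hMh1)

lemma main_list (T : List (Matrix d d ℂ))
    (hT : ∀ A ∈ T, A.PosSemidef ∧ (1 - A).PosSemidef)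
    {ρ : Matrix d d ℂ} (hρ : ρ.IsHermitian) :
    traceNorm (T.reverse.prod * ρ * T.prod - ρ)
      ≤ (T.map (fun A => traceNorm (A * ρ * A - ρ))).sum := by
  induction T with
  | nil => simp [traceNorm_zero]
  | cons Mh T ih =>
    have hMh := (hT Mh (List.mem_cons_self)).1
    have hMh1 := (hT Mh (List.mem_cons_self)).2
    have hT' : ∀ A ∈ T, A.PosSemidef ∧ (1 - A).PosSemidef :=
      fun A hA => hT A (List.mem_cons_of_mem _ hA)
    have hTh : ∀ A ∈ T, Aᴴ = A := fun A hA => (hT' A hA).1.1.eq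
    have hσ : (Mh * ρ * Mh).IsHermitian := by
      show _ᴴ = _
      rw [conjTranspose_mul, conjTranspose_mul, hMh.1.eq, hρ.eq, mul_assoc]
    have hσρ : (Mh * ρ * Mh - ρ).IsHermitian := hσ.sub hρ
    have hsplit : T.reverse.prod * (Mh * ρ * Mh) * T.prod - ρ
        = (T.reverse.prod * (Mh * ρ * Mh - ρ) * T.prod)
          + (T.reverse.prod * ρ * T.prod - ρ) := by noncomm_ring
    have h1 : (T.reverse.prod * (Mh * ρ * Mh - ρ) * T.prod).IsHermitian :=
      conj_list_herm T hTh hσρ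
    have h2 : (T.reverse.prod * ρ * T.prod - ρ).IsHermitian :=
      (conj_list_herm T hTh hρ).sub hρ
    rw [cons_conj_eq, hsplit, List.map_cons, List.sum_cons]
    calc traceNorm _ ≤ traceNorm (T.reverse.prod * (Mh * ρ * Mh - ρ) * T.prod)
          + traceNorm (T.reverse.prod * ρ * T.prod - ρ) := traceNorm_add_le h1 h2
      _ ≤ traceNorm (Mh * ρ * Mh - ρ) + (T.map (fun A => traceNorm (A * ρ * A - ρ))).sum :=
          add_le_add (traceNorm_conj_list_le T hT' hσρ) (ih hT')
      _ = _ := rfl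

end BisectionAux

/-- Key success-probability bound for the bisection decoding protocol:
Tr[M_m² M_{m−1}⋯M₁ ρ M₁⋯M_{m−1}] ≥ Tr[M_m² ρ] − 2 Σ_u D(M_u ρ M_u, ρ),
where `Mfin` plays the role of the final operator M_m and `M` lists M₁,…,M_{m−1}. -/
theorem bisection_success_bound {d : Type*} [Fintype d] [DecidableEq d]
    (ρ : Matrix d d ℂ) (hρ : ρ.PosSemidef) (hρtr : (ρ.trace).re ≤ 1)
    (m : ℕ) (M : Fin m → Matrix d d ℂ) (Mfin : Matrix d d ℂ)
    (hM : ∀ u, (M u).PosSemidef) (hM1 : ∀ u, ((1 : Matrix d d ℂ) - M u).PosSemidef)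
    (hMf : Mfin.PosSemidef) (hMf1 : ((1 : Matrix d d ℂ) - Mfin).PosSemidef) :
    ((Mfin * Mfin *
        ((List.ofFn M).reverse.prod * ρ * (List.ofFn M).prod)).trace).re ≥
      ((Mfin * Mfin * ρ).trace).re - 2 * ∑ u, traceDist (M u * ρ * M u) ρ := by
  classical
  set L := List.ofFn M with hL
  have hLmem : ∀ A ∈ L, A.PosSemidef ∧ (1 - A).PosSemidef := by
    intro A hA
    obtain ⟨u, rfl⟩ := List.mem_ofFn.mp hA
    exact ⟨hM u, hM1 u⟩
  have hmain := BisectionAux.main_list L hLmem hρ.1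
  have hsum : (L.map (fun A => traceNorm (A * ρ * A - ρ))).sum
      = ∑ u, traceNorm (M u * ρ * M u - ρ) := by
    rw [hL, List.map_ofFn, List.sum_ofFn]
    rfl
  have h2D : 2 * ∑ u, traceDist (M u * ρ * M u) ρ = ∑ u, traceNorm (M u * ρ * M u - ρ) := by
    rw [Finset.mul_sum]
    refine Finset.sum_congr rfl fun u _ => ?_
    rw [traceDist]
    ring
  set Δ := L.reverse.prod * ρ * L.prod - ρ with hΔdef
  have hLh : ∀ A ∈ L, Aᴴ = A := fun A hA => (hLmem A hA).1.1.eq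
  have hΔ : Δ.IsHermitian := (BisectionAux.conj_list_herm L hLh hρ.1).sub hρ.1
  obtain ⟨hF2, hF21⟩ := BisectionAux.sq_psd_and_le_one hMf hMf1
  have hkey := BisectionAux.neg_traceNorm_le_re_trace hΔ hF2 hF21
  have hexp : Mfin * Mfin * (L.reverse.prod * ρ * L.prod)
      = Mfin * Mfin * ρ + Mfin * Mfin * Δ := by
    rw [hΔdef]; noncomm_ring
  rw [ge_iff_le, hexp, trace_add, Complex.add_re, h2D]
  have := le_trans hmain (le_of_eq hsum)
  linarith
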